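/- The canonical (greedy) multitableau has non-positive degree. Let ρ = ((i_1,j_1),…,(i_s,j_s)) be a sequence with i_r ≥ 1 and 1 ≤ j_r ≤ n for which the greedy algorithm succeeds, and let T_c = T_c(ρ) be the resulting standard n-multitableau. Then for every r, the contribution deg(T_c^r) of the entry r to the Brundan–Kleshchev–Wang degree satisfies deg(T_c^r) ≤ 0; in particular deg_BKW(T_c) ≤ 0. -/

import Mathlib

open scoped Classical

namespace SlnWebGreedy

noncomputable section

/-- `p r` is the length of the `r`-th row (0-indexed) of a Young diagram. -/
def IsPartition (p : ℕ → ℕ) : Prop :=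
  Antitone p ∧ ∃ N, p N = 0

/-- The 0-indexed cell `(r, c)` lies in the Young diagram of `p`. -/
def InDiag (p : ℕ → ℕ) (r c : ℕ) : Prop :=
  c < p r

/-- Residue (with shift `ℓ`) of the 0-indexed cell `(r, c)`; for the
corresponding 1-indexed cell `(r+1, c+1)` this is `(c+1) - (r+1) + ℓ`. -/
def resOf (ℓ : ℕ) (r c : ℕ) : ℤ :=
  (c : ℤ) - (r : ℤ) + (ℓ : ℤ)

/-- `(r, c)` (0-indexed) is an addable cell of `p`. -/
def IsAddableCell (p : ℕ → ℕ) (r c : ℕ) : Prop :=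
  c = p r ∧ (r = 0 ∨ p r < p (r - 1))

/-- `(r, c)` (0-indexed) is a removable cell of `p`. -/
def IsRemovableCell (p : ℕ → ℕ) (r c : ℕ) : Prop :=
  c + 1 = p r ∧ p (r + 1) < p r

/-- Add to `p` its (unique) addable cell of residue `k`, if there is one. -/
def addRes (ℓ : ℕ) (p : ℕ → ℕ) (k : ℤ) : ℕ → ℕ :=
  if h : ∃ r, (r = 0 ∨ p r < p (r - 1)) ∧ (p r : ℤ) - (r : ℤ) + (ℓ : ℤ) = k then
    Function.update p h.choose (p h.choose + 1)
  else p

/-- A multitableau: `shape t r` is the length of the `r`-th row (0-indexed) of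
the `t`-th component (components are indexed by `t ∈ {1,…,n}`), and
`entry t r c` is the entry of the 0-indexed cell `(r, c)` of the `t`-th
component; everything is normalised to `0` outside of the diagrams. -/
structure MultiTableau where
  shape : ℕ → ℕ → ℕ
  entry : ℕ → ℕ → ℕ → ℕ

/-- A standard `n`-multitableau with entries in `{1,…,s}` (residue shift `ℓ`). -/
def IsStandard (n ℓ s : ℕ) (M : MultiTableau) : Prop :=
  (∀ t, IsPartition (M.shape t)) ∧
  (∀ t, (t = 0 ∨ n < t) → ∀ r, M.shape t r = 0) ∧
  (∀ t r c, InDiag (M.shape t) r c → 1 ≤ M.entry t r c ∧ M.entry t r c ≤ s) ∧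
  (∀ t r c, ¬ InDiag (M.shape t) r c → M.entry t r c = 0) ∧
  (∀ t r c c', c < c' → InDiag (M.shape t) r c' → M.entry t r c < M.entry t r c') ∧
  (∀ t r r' c, r < r' → InDiag (M.shape t) r' c → M.entry t r c < M.entry t r' c) ∧
  (∀ t r c r' c', InDiag (M.shape t) r c → InDiag (M.shape t) r' c' →
    M.entry t r c = M.entry t r' c' → r = r' ∧ c = c') ∧
  (∀ t r c t' r' c', InDiag (M.shape t) r c → InDiag (M.shape t') r' c' →
    M.entry t r c = M.entry t' r' c' → resOf ℓ r c = resOf ℓ r' c')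

/-- Add, for every component `t ∈ Tset`, the (unique) addable cell of residue
`k` of that component, giving each of the new cells the entry `e`. -/
def stepAdd (ℓ : ℕ) (k : ℤ) (e : ℕ) (Tset : Finset ℕ) (M : MultiTableau) :
    MultiTableau where
  shape := fun t => if t ∈ Tset then addRes ℓ (M.shape t) k else M.shape t
  entry := fun t r c =>
    if t ∈ Tset ∧ M.shape t r ≤ c ∧ c < addRes ℓ (M.shape t) k r then e
    else M.entry t r c

/-- The components of `M` (among `{1,…,n}`) containing a node with entry `j`. -/
def compsWith (n : ℕ) (M : MultiTableau) (j : ℕ) : Finset ℕ :=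
  (Finset.Icc 1 n).filter fun t => ∃ r c, InDiag (M.shape t) r c ∧ M.entry t r c = j

/-- The shape of `M` with all entries `> j` removed, where moreover in the
components outside `Keep` the nodes with entry `j` are removed as well. -/
def shapeTrunc (M : MultiTableau) (j : ℕ) (Keep : Finset ℕ) : ℕ → ℕ → ℕ :=
  fun t r =>
    ((Finset.range (M.shape t r)).filter fun c =>
      M.entry t r c ≤ (if t ∈ Keep then j else j - 1)).card

/-- The row of the node with entry `j` in component `t` of `M`. -/
def nodeRow (M : MultiTableau) (j t : ℕ) : ℕ :=
  if h : ∃ r c, InDiag (M.shape t) r c ∧ M.entry t r c = j then h.choose else 0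

/-- The column of the node with entry `j` in component `t` of `M`. -/
def nodeCol (M : MultiTableau) (j t : ℕ) : ℕ :=
  if h : ∃ r c, InDiag (M.shape t) r c ∧ M.entry t r c = j then
    h.choose_spec.choose
  else 0

/-- The number of addable nodes of `sh` of residue `ρ` lying strictly after the
position `(t, r)` in the order `⪯` (at most one addable node of a given residue
per component). -/
def cntAddAfter (n ℓ : ℕ) (sh : ℕ → ℕ → ℕ) (ρ : ℤ) (t r : ℕ) : ℕ :=
  ((Finset.Icc 1 n).filter fun t' => ∃ r' c', IsAddableCell (sh t') r' c' ∧
    resOf ℓ r' c' = ρ ∧ (t' < t ∨ (t' = t ∧ r < r'))).card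

/-- The number of removable nodes of `sh` of residue `ρ` lying strictly after
the position `(t, r)` in the order `⪯`. -/
def cntRemAfter (n ℓ : ℕ) (sh : ℕ → ℕ → ℕ) (ρ : ℤ) (t r : ℕ) : ℕ :=
  ((Finset.Icc 1 n).filter fun t' => ∃ r' c', IsRemovableCell (sh t') r' c' ∧
    resOf ℓ r' c' = ρ ∧ (t' < t ∨ (t' = t ∧ r < r'))).card

/-- The contribution `deg(Tʲ)` of the entry `j` to the Brundan–Kleshchev–Wang
degree of the standard multitableau `M`: listing the nodes with entry `j` as
`N₁ ≺ ⋯ ≺ N_t` (i.e. by decreasing component index), it is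
`Σ_p (A_p − R_p) − t(t−1)/2`, where `A_p` (resp. `R_p`) is the number of
addable (resp. removable) nodes of the residue of `N_p`, strictly after `N_p`,
of the multipartition underlying `Tʲ` with the nodes `N_{p+1},…,N_t` removed. -/
def degStep (n ℓ : ℕ) (M : MultiTableau) (j : ℕ) : ℤ :=
  (∑ t ∈ compsWith n M j,
    ((cntAddAfter n ℓ (shapeTrunc M j ((compsWith n M j).filter fun t' => t ≤ t'))
        (resOf ℓ (nodeRow M j t) (nodeCol M j t)) t (nodeRow M j t) : ℤ) -
      (cntRemAfter n ℓ (shapeTrunc M j ((compsWith n M j).filter fun t' => t ≤ t'))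
        (resOf ℓ (nodeRow M j t) (nodeCol M j t)) t (nodeRow M j t) : ℤ))) -
  (((compsWith n M j).card * ((compsWith n M j).card - 1) / 2 : ℕ) : ℤ)

/-- The Brundan–Kleshchev–Wang degree of a standard multitableau with entries
in `{1,…,s}`. -/
def degBKW (n ℓ s : ℕ) (M : MultiTableau) : ℤ :=
  ∑ j ∈ Finset.Icc 1 s, degStep n ℓ M j

/-- The set of indices `t ∈ {1,…,n}` of components of `M` possessing an addable
node of residue `ρ`. -/
def addableComps (n ℓ : ℕ) (M : MultiTableau) (ρ : ℤ) : Finset ℕ :=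
  (Finset.Icc 1 n).filter fun t =>
    ∃ r c, IsAddableCell (M.shape t) r c ∧ resOf ℓ r c = ρ

/-- The `j` smallest elements of a finite set of naturals. -/
def takeMin (A : Finset ℕ) (j : ℕ) : Finset ℕ :=
  ((A.sort (· ≤ ·)).take j).toFinset

/-- The intermediate multitableaux of the greedy algorithm for the sequence
`ρ = ((i_1,j_1),…,(i_s,j_s))` (`i_r = res r`, `j_r = mult r`): at step `r`,
nodes with entry `r` are added at the addable nodes of residue `i_r` of the
`j_r` smallest-index components possessing one (the rightmost possible
positions). -/
def greedyAux (n ℓ : ℕ) {s : ℕ} (res mult : Fin s → ℕ) : ℕ → MultiTableau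
  | 0 => ⟨fun _ _ => 0, fun _ _ _ => 0⟩
  | r + 1 =>
    if h : r < s then
      stepAdd ℓ (res ⟨r, h⟩ : ℤ) (r + 1)
        (takeMin (addableComps n ℓ (greedyAux n ℓ res mult r) (res ⟨r, h⟩ : ℤ))
          (mult ⟨r, h⟩))
        (greedyAux n ℓ res mult r)
    else greedyAux n ℓ res mult r

/-- The canonical (greedy) multitableau `T_c(ρ)`. -/
def greedyTab (n ℓ : ℕ) {s : ℕ} (res mult : Fin s → ℕ) : MultiTableau :=
  greedyAux n ℓ res mult s

/-- The greedy algorithm succeeds: at every step `r` there are at least `j_r`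
components possessing an addable node of residue `i_r`. -/
def GreedySucceeds (n ℓ : ℕ) {s : ℕ} (res mult : Fin s → ℕ) : Prop :=
  ∀ r : Fin s,
    mult r ≤ (addableComps n ℓ (greedyAux n ℓ res mult r.val) (res r : ℤ)).card

/-- `M` has residue sequence `ρ = ((i_1,j_1),…,(i_s,j_s))`: for each `r`,
exactly `j_r` nodes carry the entry `r` (equivalently, under standardness,
`j_r` components contain the entry `r`) and they all have residue `i_r`. -/
def HasResSeqRM (n ℓ : ℕ) {s : ℕ} (res mult : Fin s → ℕ) (M : MultiTableau) :
    Prop :=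
  ∀ r : Fin s,
    (compsWith n M (r.val + 1)).card = mult r ∧
    ∀ t r' c, InDiag (M.shape t) r' c → M.entry t r' c = r.val + 1 →
      resOf ℓ r' c = (res r : ℤ)

/-- The number of nodes of the partition `p`. -/
def psize (p : ℕ → ℕ) : ℕ :=
  if h : ∃ N, p N = 0 then ∑ r ∈ Finset.range (Nat.find h), p r else 0

/-- The shape of the multitableau obtained from `M` by removing all nodes with
entries `> j`. -/
def shapeUpTo (M : MultiTableau) (j : ℕ) : ℕ → ℕ → ℕ :=
  fun t r => ((Finset.range (M.shape t r)).filter fun c => M.entry t r c ≤ j).card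

/-- The dominance order on `n`-multipartitions: `λ ⊴ μ` iff for every
`i ∈ {1,…,n}` and every `a ≥ 0`,
`Σ_{i′ > i} |λ_{i′}| + Σ_{b=1}^{a} (λ_i)_b ≤ Σ_{i′ > i} |μ_{i′}| + Σ_{b=1}^{a} (μ_i)_b`. -/
def MPDomLE (n : ℕ) (lam mu : ℕ → ℕ → ℕ) : Prop :=
  ∀ i, 1 ≤ i → i ≤ n → ∀ a : ℕ,
    ((∑ i' ∈ Finset.Ioc i n, psize (lam i')) + ∑ b ∈ Finset.range a, lam i b) ≤
      (∑ i' ∈ Finset.Ioc i n, psize (mu i')) + ∑ b ∈ Finset.range a, mu i b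

/-- The dominance order on standard multitableaux: `T ⊴ T′` iff
`shape(Tʲ) ⊴ shape(T′ʲ)` for all `j`. -/
def TabDomLE (n : ℕ) (M M' : MultiTableau) : Prop :=
  ∀ j : ℕ, MPDomLE n (shapeUpTo M j) (shapeUpTo M' j)


section Helpers

lemma content_strictAnti {p : ℕ → ℕ} (hp : Antitone p) {a b : ℕ} (hab : a < b) :
    (p b : ℤ) - b < (p a : ℤ) - a := by
  have h1 : p b ≤ p a := hp hab.le
  omega

lemma addRes_spec (ℓ : ℕ) {p : ℕ → ℕ} {k : ℤ}
    (h : ∃ r, (r = 0 ∨ p r < p (r - 1)) ∧ (p r : ℤ) - (r : ℤ) + (ℓ : ℤ) = k) :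
    ∃ r₀, (r₀ = 0 ∨ p r₀ < p (r₀ - 1)) ∧ (p r₀ : ℤ) - (r₀ : ℤ) + (ℓ : ℤ) = k ∧
      addRes ℓ p k = Function.update p r₀ (p r₀ + 1) := by
  refine ⟨h.choose, h.choose_spec.1, h.choose_spec.2, ?_⟩
  rw [addRes, dif_pos h]

lemma update_antitone {p : ℕ → ℕ} (hp : Antitone p) {r₀ : ℕ}
    (hc : r₀ = 0 ∨ p r₀ < p (r₀ - 1)) :
    Antitone (Function.update p r₀ (p r₀ + 1)) := by
  intro a b hab
  simp only [Function.update_apply]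
  split_ifs with hb ha ha
  · exact le_rfl
  · have ha' : a < r₀ := by omega
    have hr0 : r₀ ≠ 0 := by omega
    have h2 : p r₀ < p (r₀ - 1) := hc.resolve_left hr0
    have h3 : p (r₀ - 1) ≤ p a := hp (by omega)
    omega
  · have : p b ≤ p r₀ := hp (by omega)
    omega
  · exact hp hab

lemma addRes_antitone (ℓ : ℕ) {p : ℕ → ℕ} (hp : Antitone p) (k : ℤ) :
    Antitone (addRes ℓ p k) := by
  rw [addRes]
  split_ifs with h
  · exact update_antitone hp h.choose_spec.1
  · exact hp

lemma le_addRes (ℓ : ℕ) (p : ℕ → ℕ) (k : ℤ) (m : ℕ) : p m ≤ addRes ℓ p k m := by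
  rw [addRes]
  split_ifs with h
  · rcases eq_or_ne m h.choose with rfl | hm
    · rw [Function.update_self]; omega
    · rw [Function.update_of_ne hm]
  · exact le_rfl

lemma no_addable_update {ℓ : ℕ} {p : ℕ → ℕ} (hp : Antitone p) {r₀ : ℕ} {k : ℤ}
    (hk : (p r₀ : ℤ) - (r₀ : ℤ) + (ℓ : ℤ) = k) :
    ¬ ∃ a c, IsAddableCell (Function.update p r₀ (p r₀ + 1)) a c ∧ resOf ℓ a c = k := by
  rintro ⟨a, c, ⟨hc, -⟩, hres⟩
  rw [resOf] at hres
  subst hc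
  rcases lt_trichotomy a r₀ with h | rfl | h
  · rw [Function.update_of_ne h.ne] at hres
    have := content_strictAnti hp h
    omega
  · rw [Function.update_self] at hres; omega
  · rw [Function.update_of_ne h.ne'] at hres
    have := content_strictAnti hp h
    omega

end Helpers

lemma addRes_vanish {ℓ r : ℕ} {p : ℕ → ℕ} {k : ℤ} (h0 : ∀ m, r ≤ m → p m = 0)
    {m : ℕ} (hm : r + 1 ≤ m) : addRes ℓ p k m = 0 := by
  rw [addRes]
  split_ifs with h
  · rcases h.choose_spec.1 with h1 | h1
    · rw [Function.update_of_ne (by omega)]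
      exact h0 m (by omega)
    · have h2 : h.choose - 1 < r := by
        by_contra hcon
        push_neg at hcon
        rw [h0 _ hcon] at h1
        omega
      rw [Function.update_of_ne (by omega)]
      exact h0 m (by omega)
  · exact h0 m (by omega)

section Greedy

lemma stepAdd_shape (ℓ : ℕ) (k : ℤ) (e : ℕ) (Tset : Finset ℕ) (M : MultiTableau) (t : ℕ) :
    (stepAdd ℓ k e Tset M).shape t = if t ∈ Tset then addRes ℓ (M.shape t) k else M.shape t := rfl

lemma stepAdd_entry (ℓ : ℕ) (k : ℤ) (e : ℕ) (Tset : Finset ℕ) (M : MultiTableau) (t a c : ℕ) :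
    (stepAdd ℓ k e Tset M).entry t a c =
      if t ∈ Tset ∧ M.shape t a ≤ c ∧ c < addRes ℓ (M.shape t) k a then e
      else M.entry t a c := rfl

lemma stepAdd_shape_le (ℓ : ℕ) (k : ℤ) (e : ℕ) (Tset : Finset ℕ) (M : MultiTableau) (t a : ℕ) :
    M.shape t a ≤ (stepAdd ℓ k e Tset M).shape t a := by
  rw [stepAdd_shape]
  split_ifs with ht
  · exact le_addRes ℓ _ _ a
  · exact le_rfl

lemma stepAdd_entry_low {ℓ : ℕ} {k : ℤ} {e : ℕ} {Tset : Finset ℕ} {M : MultiTableau}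
    {t a c : ℕ} (hc : c < M.shape t a) :
    (stepAdd ℓ k e Tset M).entry t a c = M.entry t a c := by
  rw [stepAdd_entry, if_neg]
  rintro ⟨-, h2, -⟩
  omega

lemma stepAdd_entry_high {ℓ : ℕ} {k : ℤ} {e : ℕ} {Tset : Finset ℕ} {M : MultiTableau}
    {t a c : ℕ} (hc : (stepAdd ℓ k e Tset M).shape t a ≤ c) :
    (stepAdd ℓ k e Tset M).entry t a c = M.entry t a c := by
  rw [stepAdd_entry, if_neg]
  rintro ⟨ht, -, h3⟩
  rw [stepAdd_shape, if_pos ht] at hc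
  omega

lemma stepAdd_entry_new {ℓ : ℕ} {k : ℤ} {e : ℕ} {Tset : Finset ℕ} {M : MultiTableau}
    {t a c : ℕ} (h1 : M.shape t a ≤ c) (h2 : c < (stepAdd ℓ k e Tset M).shape t a) :
    (stepAdd ℓ k e Tset M).entry t a c = e := by
  have ht : t ∈ Tset := by
    by_contra ht
    rw [stepAdd_shape, if_neg ht] at h2
    omega
  rw [stepAdd_shape, if_pos ht] at h2
  rw [stepAdd_entry, if_pos ⟨ht, h1, h2⟩]

lemma stepAdd_mem_of_shape_ne {ℓ : ℕ} {k : ℤ} {e : ℕ} {Tset : Finset ℕ} {M : MultiTableau}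
    {t a c : ℕ} (h1 : M.shape t a ≤ c) (h2 : c < (stepAdd ℓ k e Tset M).shape t a) :
    t ∈ Tset := by
  by_contra ht
  rw [stepAdd_shape, if_neg ht] at h2
  omega

variable {n ℓ : ℕ} {s : ℕ} {res mult : Fin s → ℕ}

lemma greedyAux_succ (r : ℕ) :
    greedyAux n ℓ res mult (r + 1) =
      if h : r < s then
        stepAdd ℓ (res ⟨r, h⟩ : ℤ) (r + 1)
          (takeMin (addableComps n ℓ (greedyAux n ℓ res mult r) (res ⟨r, h⟩ : ℤ))
            (mult ⟨r, h⟩))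
          (greedyAux n ℓ res mult r)
      else greedyAux n ℓ res mult r := rfl

lemma greedy_shape_antitone (r t : ℕ) : Antitone ((greedyAux n ℓ res mult r).shape t) := by
  induction r with
  | zero => exact fun a b _ => le_rfl
  | succ r ih =>
    rw [greedyAux_succ]
    split_ifs with h
    · rw [stepAdd_shape]
      split_ifs with ht
      · exact addRes_antitone ℓ ih _
      · exact ih
    · exact ih

lemma greedy_shape_vanish : ∀ r t m, r ≤ m → (greedyAux n ℓ res mult r).shape t m = 0
  | 0, t, m, _ => rfl
  | r+1, t, m, hm => by
    rw [greedyAux_succ]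
    split_ifs with h
    · rw [stepAdd_shape]
      split_ifs with ht
      · exact addRes_vanish (fun m' hm' => greedy_shape_vanish r t m' hm') hm
      · exact greedy_shape_vanish r t m (by omega)
    · exact greedy_shape_vanish r t m (by omega)

lemma greedy_shape_le_succ (r t m : ℕ) :
    (greedyAux n ℓ res mult r).shape t m ≤ (greedyAux n ℓ res mult (r+1)).shape t m := by
  rw [greedyAux_succ]
  split_ifs with h
  · exact stepAdd_shape_le ℓ _ _ _ _ t m
  · exact le_rfl

lemma greedy_shape_mono {r r' : ℕ} (h : r ≤ r') (t m : ℕ) :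
    (greedyAux n ℓ res mult r).shape t m ≤ (greedyAux n ℓ res mult r').shape t m := by
  induction r', h using Nat.le_induction with
  | base => exact le_rfl
  | succ r' hr ih => exact ih.trans (greedy_shape_le_succ r' t m)

lemma greedy_entry_le : ∀ r t a c, (greedyAux n ℓ res mult r).entry t a c ≤ r
  | 0, _, _, _ => le_rfl
  | r+1, t, a, c => by
    rw [greedyAux_succ]
    split_ifs with h
    · rw [stepAdd_entry]
      split_ifs with hcond
      · exact le_rfl
      · exact (greedy_entry_le r t a c).trans (by omega)
    · exact (greedy_entry_le r t a c).trans (by omega)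

lemma greedy_entry_pres_succ {r t a c : ℕ} (hc : c < (greedyAux n ℓ res mult r).shape t a) :
    (greedyAux n ℓ res mult (r+1)).entry t a c = (greedyAux n ℓ res mult r).entry t a c := by
  rw [greedyAux_succ]
  split_ifs with h
  · exact stepAdd_entry_low hc
  · rfl

lemma greedy_entry_pres {r r' : ℕ} (h : r ≤ r') {t a c : ℕ}
    (hc : c < (greedyAux n ℓ res mult r).shape t a) :
    (greedyAux n ℓ res mult r').entry t a c = (greedyAux n ℓ res mult r).entry t a c := by
  induction r', h using Nat.le_induction with
  | base => rfl
  | succ r' hr ih =>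
    rw [greedy_entry_pres_succ (lt_of_lt_of_le hc (greedy_shape_mono hr t a)), ih]

lemma greedy_L {j r : ℕ} (hjr : j ≤ r) {t a c : ℕ}
    (hc : c < (greedyAux n ℓ res mult r).shape t a) :
    ((greedyAux n ℓ res mult r).entry t a c ≤ j ↔
      c < (greedyAux n ℓ res mult j).shape t a) := by
  induction r, hjr using Nat.le_induction with
  | base => exact ⟨fun _ => hc, fun _ => greedy_entry_le j t a c⟩
  | succ r hr ih =>
    rw [greedyAux_succ] at hc ⊢
    split_ifs at hc ⊢ with h
    · by_cases hcr : c < (greedyAux n ℓ res mult r).shape t a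
      · rw [stepAdd_entry_low hcr]
        exact ih hcr
      · push_neg at hcr
        rw [stepAdd_entry_new hcr hc]
        constructor
        · intro hle; omega
        · intro hj
          exact absurd (lt_of_lt_of_le hj (greedy_shape_mono hr t a)) (by omega)
    · exact ih hc

lemma greedy_cell_iff {j : ℕ} (hj : j ≤ s) (t a c : ℕ) :
    (c < (greedyAux n ℓ res mult s).shape t a ∧
      (greedyAux n ℓ res mult s).entry t a c ≤ j) ↔
      c < (greedyAux n ℓ res mult j).shape t a := by
  constructor
  · rintro ⟨h1, h2⟩
    exact (greedy_L hj h1).mp h2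
  · intro h1
    have h2 := lt_of_lt_of_le h1 (greedy_shape_mono hj t a)
    exact ⟨h2, (greedy_L hj h2).mpr h1⟩

lemma greedy_shapeTrunc {b : ℕ} (hb : b ≤ s) (t a : ℕ) :
    ((Finset.range ((greedyAux n ℓ res mult s).shape t a)).filter
      fun c => (greedyAux n ℓ res mult s).entry t a c ≤ b).card
      = (greedyAux n ℓ res mult b).shape t a := by
  have heq : ((Finset.range ((greedyAux n ℓ res mult s).shape t a)).filter
      fun c => (greedyAux n ℓ res mult s).entry t a c ≤ b)
      = Finset.range ((greedyAux n ℓ res mult b).shape t a) := by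
    ext c
    simp only [Finset.mem_filter, Finset.mem_range]
    exact greedy_cell_iff hb t a c
  rw [heq, Finset.card_range]

end Greedy

section TakeMin

lemma takeMin_subset (A : Finset ℕ) (j : ℕ) : takeMin A j ⊆ A := by
  intro x hx
  rw [takeMin, List.mem_toFinset] at hx
  have := List.take_subset j (A.sort (· ≤ ·)) hx
  rwa [Finset.mem_sort] at this

lemma mem_takeMin_of_le {A : Finset ℕ} {j x y : ℕ} (hx : x ∈ A) (hy : y ∈ takeMin A j)
    (hxy : x ≤ y) : x ∈ takeMin A j := by
  rw [takeMin, List.mem_toFinset] at hy ⊢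
  set l := A.sort (· ≤ ·) with hl
  have hs : l.Pairwise (· ≤ ·) := Finset.pairwise_sort _ _
  have hxl : x ∈ l := by rw [hl, Finset.mem_sort]; exact hx
  obtain ⟨ix, hix, hgx⟩ := List.mem_iff_getElem.mp hxl
  obtain ⟨iy, hiy, hgy⟩ := List.mem_iff_getElem.mp hy
  have hiyl : iy < l.length := by
    have := hiy
    rw [List.length_take] at this
    omega
  have hiyj : iy < j := by
    have := hiy
    rw [List.length_take] at this
    omega
  by_cases hij : ix < j
  · have hlen : ix < (l.take j).length := by rw [List.length_take]; omega
    have : (l.take j)[ix] = x := by rw [List.getElem_take]; exact hgx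
    exact this ▸ List.getElem_mem hlen
  · have hgy' : l[iy] = y := by rw [← List.getElem_take (h := hiy)]; exact hgy
    have hle : l[iy] ≤ l[ix] := by
      rcases eq_or_lt_of_le (show iy ≤ ix by omega) with heq | hlt
      · subst heq; exact le_rfl
      · exact List.pairwise_iff_getElem.mp hs iy ix hiyl hix hlt
    rw [hgx, hgy'] at hle
    have : x = y := le_antisymm hxy hle
    rw [this]
    exact hy

lemma sum_card_filter_lt (S : Finset ℕ) :
    (∑ t ∈ S, ((S.filter fun t' => t' < t).card)) = S.card.choose 2 := by
  induction S using Finset.induction_on_max with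
  | empty => simp
  | insert a S ha ih =>
    have haS : a ∉ S := fun h => lt_irrefl a (ha a h)
    rw [Finset.sum_insert haS]
    have h1 : (insert a S).filter (fun t' => t' < a) = S := by
      ext x
      simp only [Finset.mem_filter, Finset.mem_insert]
      constructor
      · rintro ⟨rfl | hx, hlt⟩
        · omega
        · exact hx
      · intro hx
        exact ⟨Or.inr hx, ha x hx⟩
    have h2 : ∀ t ∈ S, (insert a S).filter (fun t' => t' < t) = S.filter (fun t' => t' < t) := by
      intro t ht
      ext x
      simp only [Finset.mem_filter, Finset.mem_insert]
      constructor
      · rintro ⟨rfl | hx, hlt⟩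
        · exact absurd (ha t ht) (by omega)
        · exact ⟨hx, hlt⟩
      · rintro ⟨hx, hlt⟩
        exact ⟨Or.inr hx, hlt⟩
    rw [h1, Finset.sum_congr rfl (fun t ht => by rw [h2 t ht]), ih,
      Finset.card_insert_of_notMem haS]
    have h3 : (S.card + 1).choose 2 = S.card.choose 1 + S.card.choose 2 :=
      Nat.choose_succ_succ S.card 1
    rw [Nat.choose_one_right] at h3
    omega

end TakeMin

section Main

lemma addable_exists_iff (ℓ : ℕ) (p : ℕ → ℕ) (k : ℤ) :
    (∃ a c, IsAddableCell p a c ∧ resOf ℓ a c = k) ↔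
      ∃ a, (a = 0 ∨ p a < p (a - 1)) ∧ (p a : ℤ) - (a : ℤ) + (ℓ : ℤ) = k := by
  constructor
  · rintro ⟨a, c, ⟨hc, hcond⟩, hres⟩
    subst hc
    simp only [resOf] at hres
    exact ⟨a, hcond, hres⟩
  · rintro ⟨a, hcond, hk⟩
    refine ⟨a, p a, ⟨rfl, hcond⟩, ?_⟩
    simp only [resOf]
    exact hk

variable {n ℓ : ℕ} {s : ℕ} {res mult : Fin s → ℕ}

lemma greedy_node_spec {r : ℕ} (hr : r < s) {t : ℕ}
    (ht : t ∈ takeMin (addableComps n ℓ (greedyAux n ℓ res mult r) (res ⟨r, hr⟩ : ℤ))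
      (mult ⟨r, hr⟩)) :
    ∃ r₀ : ℕ,
      (((greedyAux n ℓ res mult r).shape t r₀ : ℤ) - (r₀ : ℤ) + (ℓ : ℤ)
        = (res ⟨r, hr⟩ : ℤ)) ∧
      (greedyAux n ℓ res mult (r+1)).shape t =
        Function.update ((greedyAux n ℓ res mult r).shape t) r₀
          ((greedyAux n ℓ res mult r).shape t r₀ + 1) ∧
      (InDiag ((greedyAux n ℓ res mult s).shape t) r₀
          ((greedyAux n ℓ res mult r).shape t r₀) ∧
        (greedyAux n ℓ res mult s).entry t r₀ ((greedyAux n ℓ res mult r).shape t r₀)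
          = r + 1) ∧
      nodeRow (greedyAux n ℓ res mult s) (r+1) t = r₀ ∧
      nodeCol (greedyAux n ℓ res mult s) (r+1) t
        = (greedyAux n ℓ res mult r).shape t r₀ := by
  set p := (greedyAux n ℓ res mult r).shape t with hp
  set k : ℤ := (res ⟨r, hr⟩ : ℤ) with hkdef
  have htA : t ∈ addableComps n ℓ (greedyAux n ℓ res mult r) k := takeMin_subset _ _ ht
  rw [addableComps, Finset.mem_filter] at htA
  have hex : ∃ a, (a = 0 ∨ p a < p (a - 1)) ∧ (p a : ℤ) - (a : ℤ) + (ℓ : ℤ) = k :=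
    (addable_exists_iff ℓ p k).mp htA.2
  obtain ⟨r₀, hcond, hk, hupd⟩ := addRes_spec ℓ hex
  have hstep : greedyAux n ℓ res mult (r+1) =
      stepAdd ℓ k (r + 1)
        (takeMin (addableComps n ℓ (greedyAux n ℓ res mult r) k) (mult ⟨r, hr⟩))
        (greedyAux n ℓ res mult r) := by
    rw [greedyAux_succ, dif_pos hr]
  have hshape : (greedyAux n ℓ res mult (r+1)).shape t =
      Function.update p r₀ (p r₀ + 1) := by
    rw [hstep, stepAdd_shape, if_pos ht, ← hp, hupd]
  -- the new cell
  have hcell1 : p r₀ < (greedyAux n ℓ res mult (r+1)).shape t r₀ := by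
    rw [hshape, Function.update_self]
    omega
  have hcell2 : p r₀ < (greedyAux n ℓ res mult s).shape t r₀ :=
    lt_of_lt_of_le hcell1 (greedy_shape_mono hr t r₀)
  have hent1 : (greedyAux n ℓ res mult (r+1)).entry t r₀ (p r₀) = r + 1 := by
    rw [hstep]
    exact stepAdd_entry_new le_rfl (by rw [← hstep]; exact hcell1)
  have hent : (greedyAux n ℓ res mult s).entry t r₀ (p r₀) = r + 1 := by
    rw [greedy_entry_pres hr hcell1, hent1]
  -- uniqueness
  have hun : ∀ a c, c < (greedyAux n ℓ res mult s).shape t a →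
      (greedyAux n ℓ res mult s).entry t a c = r + 1 → a = r₀ ∧ c = p r₀ := by
    intro a c h1 h2
    have h3 : c < (greedyAux n ℓ res mult (r+1)).shape t a :=
      (greedy_L hr h1).mp h2.le
    have h4 : ¬ c < (greedyAux n ℓ res mult r).shape t a := by
      intro hcc
      have := (greedy_L hr.le h1).mpr hcc
      omega
    rw [hshape] at h3
    rcases eq_or_ne a r₀ with rfl | hne
    · rw [Function.update_self] at h3
      rw [← hp] at h4
      exact ⟨rfl, by omega⟩
    · rw [Function.update_of_ne hne] at h3
      exact absurd h3 h4
  have hEx : ∃ a c, InDiag ((greedyAux n ℓ res mult s).shape t) a c ∧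
      (greedyAux n ℓ res mult s).entry t a c = r + 1 :=
    ⟨r₀, p r₀, hcell2, hent⟩
  have hrow : nodeRow (greedyAux n ℓ res mult s) (r+1) t = r₀ := by
    rw [nodeRow, dif_pos hEx]
    have hch := hEx.choose_spec.choose_spec
    exact (hun hEx.choose hEx.choose_spec.choose hch.1 hch.2).1
  have hcol : nodeCol (greedyAux n ℓ res mult s) (r+1) t = p r₀ := by
    rw [nodeCol, dif_pos hEx]
    have hch := hEx.choose_spec.choose_spec
    exact (hun hEx.choose hEx.choose_spec.choose hch.1 hch.2).2
  exact ⟨r₀, hk, hshape, ⟨hcell2, hent⟩, hrow, hcol⟩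

lemma greedy_compsWith {r : ℕ} (hr : r < s) :
    compsWith n (greedyAux n ℓ res mult s) (r+1) =
      takeMin (addableComps n ℓ (greedyAux n ℓ res mult r) (res ⟨r, hr⟩ : ℤ))
        (mult ⟨r, hr⟩) := by
  ext t
  rw [compsWith, Finset.mem_filter]
  constructor
  · rintro ⟨hIcc, a, c, hdiag, hent⟩
    have h1 : c < (greedyAux n ℓ res mult (r+1)).shape t a :=
      (greedy_L hr hdiag).mp hent.le
    have h2 : ¬ c < (greedyAux n ℓ res mult r).shape t a := by
      intro hcc
      have := (greedy_L hr.le hdiag).mpr hcc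
      omega
    have hstep : greedyAux n ℓ res mult (r+1) =
        stepAdd ℓ (res ⟨r, hr⟩ : ℤ) (r + 1)
          (takeMin (addableComps n ℓ (greedyAux n ℓ res mult r) (res ⟨r, hr⟩ : ℤ))
            (mult ⟨r, hr⟩))
          (greedyAux n ℓ res mult r) := by
      rw [greedyAux_succ, dif_pos hr]
    rw [hstep] at h1
    exact stepAdd_mem_of_shape_ne (by omega) h1
  · intro ht
    obtain ⟨r₀, hk, hshape, hcell, hrow, hcol⟩ := greedy_node_spec hr ht
    refine ⟨?_, r₀, _, hcell.1, hcell.2⟩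
    exact Finset.mem_of_mem_filter t (takeMin_subset _ _ ht)

end Main

section Final

variable {n ℓ : ℕ} {s : ℕ} {res mult : Fin s → ℕ}

lemma greedy_shapeTrunc_fun {j : ℕ} (hj : j ≤ s) (hj1 : j - 1 ≤ s) (Keep : Finset ℕ)
    (t' : ℕ) :
    shapeTrunc (greedyAux n ℓ res mult s) j Keep t' =
      (greedyAux n ℓ res mult (if t' ∈ Keep then j else j - 1)).shape t' := by
  funext a
  rw [shapeTrunc]
  split_ifs with h
  · exact greedy_shapeTrunc hj t' a
  · exact greedy_shapeTrunc hj1 t' a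

lemma greedy_degStep (r : Fin s) :
    degStep n ℓ (greedyAux n ℓ res mult s) (r.val + 1) ≤ 0 := by
  have hr : r.val < s := r.isLt
  have hC := greedy_compsWith (n := n) (ℓ := ℓ) (res := res) (mult := mult) hr
  rw [degStep, hC]
  set M := greedyAux n ℓ res mult s with hM
  set T := takeMin (addableComps n ℓ (greedyAux n ℓ res mult r.val)
    (res ⟨r.val, hr⟩ : ℤ)) (mult ⟨r.val, hr⟩) with hT
  have key : ∀ t ∈ T,
      ((cntAddAfter n ℓ (shapeTrunc M (r.val+1) (T.filter fun t' => t ≤ t'))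
          (resOf ℓ (nodeRow M (r.val+1) t) (nodeCol M (r.val+1) t)) t
          (nodeRow M (r.val+1) t) : ℤ)
        - (cntRemAfter n ℓ (shapeTrunc M (r.val+1) (T.filter fun t' => t ≤ t'))
          (resOf ℓ (nodeRow M (r.val+1) t) (nodeCol M (r.val+1) t)) t
          (nodeRow M (r.val+1) t) : ℤ))
        ≤ ((T.filter fun t' => t' < t).card : ℤ) := by
    intro t ht
    obtain ⟨r₀, hk, hshape, hcell, hrow, hcol⟩ := greedy_node_spec hr ht
    rw [← hM] at hrow hcol
    have hρ : resOf ℓ (nodeRow M (r.val+1) t) (nodeCol M (r.val+1) t)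
        = (res ⟨r.val, hr⟩ : ℤ) := by
      rw [hrow, hcol]
      simp only [resOf]
      exact hk
    have hsubset : (Finset.Icc 1 n).filter (fun t' =>
        ∃ a c, IsAddableCell (shapeTrunc M (r.val+1) (T.filter fun t'' => t ≤ t'') t') a c ∧
          resOf ℓ a c = resOf ℓ (nodeRow M (r.val+1) t) (nodeCol M (r.val+1) t) ∧
          (t' < t ∨ (t' = t ∧ nodeRow M (r.val+1) t < a)))
        ⊆ T.filter fun t' => t' < t := by
      intro t' ht'
      rw [Finset.mem_filter] at ht'
      obtain ⟨hIcc, a, c, hAdd, hres', horder⟩ := ht'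
      rw [hρ] at hres'
      rcases horder with hlt | ⟨rfl, hgt⟩
      · have hKeepF : t' ∉ T.filter (fun x => t ≤ x) := by
          intro hmem
          exact absurd (Finset.mem_filter.mp hmem).2 (by omega)
        have hfun : shapeTrunc M (r.val+1) (T.filter fun t'' => t ≤ t'') t' =
            (greedyAux n ℓ res mult r.val).shape t' := by
          rw [hM, greedy_shapeTrunc_fun (by omega) (by omega), if_neg hKeepF]
          norm_num
        rw [hfun] at hAdd
        have hmemA : t' ∈ addableComps n ℓ (greedyAux n ℓ res mult r.val)
            (res ⟨r.val, hr⟩ : ℤ) :=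
          Finset.mem_filter.mpr ⟨hIcc, a, c, hAdd, hres'⟩
        exact Finset.mem_filter.mpr ⟨mem_takeMin_of_le hmemA ht hlt.le, hlt⟩
      · have hKeepT : t' ∈ T.filter (fun x => t' ≤ x) := Finset.mem_filter.mpr ⟨ht, le_rfl⟩
        have hfun : shapeTrunc M (r.val+1) (T.filter fun t'' => t' ≤ t'') t' =
            (greedyAux n ℓ res mult (r.val+1)).shape t' := by
          rw [hM, greedy_shapeTrunc_fun (by omega) (by omega), if_pos hKeepT]
        rw [hfun, hshape] at hAdd
        exact absurd ⟨a, c, hAdd, hres'⟩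
          (no_addable_update (greedy_shape_antitone r.val t') hk)
    have hA : cntAddAfter n ℓ (shapeTrunc M (r.val+1) (T.filter fun t' => t ≤ t'))
        (resOf ℓ (nodeRow M (r.val+1) t) (nodeCol M (r.val+1) t)) t
        (nodeRow M (r.val+1) t) ≤ (T.filter fun t' => t' < t).card := by
      rw [cntAddAfter]
      exact Finset.card_le_card hsubset
    omega
  have hsum : (∑ t ∈ T,
      ((cntAddAfter n ℓ (shapeTrunc M (r.val+1) (T.filter fun t' => t ≤ t'))
          (resOf ℓ (nodeRow M (r.val+1) t) (nodeCol M (r.val+1) t)) t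
          (nodeRow M (r.val+1) t) : ℤ)
        - (cntRemAfter n ℓ (shapeTrunc M (r.val+1) (T.filter fun t' => t ≤ t'))
          (resOf ℓ (nodeRow M (r.val+1) t) (nodeCol M (r.val+1) t)) t
          (nodeRow M (r.val+1) t) : ℤ)))
      ≤ ((T.card * (T.card - 1) / 2 : ℕ) : ℤ) := by
    calc (∑ t ∈ T, _) ≤ ∑ t ∈ T, ((T.filter fun t' => t' < t).card : ℤ) :=
          Finset.sum_le_sum key
      _ = ((∑ t ∈ T, (T.filter fun t' => t' < t).card : ℕ) : ℤ) := by push_cast; rfl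
      _ = ((T.card * (T.card - 1) / 2 : ℕ) : ℤ) := by
          rw [sum_card_filter_lt, Nat.choose_two_right]
  omega

end Final

/-!
STATEMENT 7: The canonical (greedy) multitableau has non-positive degree: if
the greedy algorithm succeeds for `ρ = ((i_1,j_1),…,(i_s,j_s))` then for every
`r` the contribution `deg(T_cʳ)` of the entry `r` to the
Brundan–Kleshchev–Wang degree is `≤ 0`; in particular `deg_BKW(T_c) ≤ 0`.
-/
theorem greedy_deg_nonpos (n ℓ : ℕ) (hn : 1 ≤ n) (hℓ : 1 ≤ ℓ) (s : ℕ)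
    (res mult : Fin s → ℕ) (hres : ∀ r, 1 ≤ res r)
    (hmult₁ : ∀ r, 1 ≤ mult r) (hmult₂ : ∀ r, mult r ≤ n)
    (hsucc : GreedySucceeds n ℓ res mult) :
    (∀ r : Fin s, degStep n ℓ (greedyTab n ℓ res mult) (r.val + 1) ≤ 0) ∧
    degBKW n ℓ s (greedyTab n ℓ res mult) ≤ 0 := by
  constructor
  · intro r
    exact greedy_degStep r
  · rw [degBKW]
    apply Finset.sum_nonpos
    intro j hj
    rw [Finset.mem_Icc] at hj
    have hj1 : j - 1 < s := by omega
    have h2 : j - 1 + 1 = j := by omega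
    rw [← h2]
    exact greedy_degStep ⟨j - 1, hj1⟩

end

end SlnWebGreedy
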